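/- In G = F₂ × ℤ, let H1 = ⟨(x,t), (y,1)⟩ and H2 = ⟨(x,1), (y,1)⟩. Then H1 ∩ H2 = N × {1}, where N is the normal closure of y in F₂ (equivalently, N = {w ∈ F₂ : the exponent sum of x in w is 0}); moreover H1 ∩ H2 is generated by {(x^i y x^{-i}, 1) : i ∈ ℤ} and is not finitely generated. -/

import Mathlib

namespace Moldavanski

abbrev F₂ := FreeGroup (Fin 2)

def x : F₂ := FreeGroup.of 0
def y : F₂ := FreeGroup.of 1
def t : Multiplicative ℤ := Multiplicative.ofAdd 1

/-- exponent sum of x -/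
def φ : F₂ →* Multiplicative ℤ :=
  FreeGroup.lift fun i : Fin 2 => if i = 0 then Multiplicative.ofAdd (1 : ℤ) else 1

lemma φx : φ x = Multiplicative.ofAdd 1 := by simp [φ, x]
lemma φy : φ y = 1 := by simp [φ, y]

def c (i : ℤ) : F₂ := x ^ i * y * x ^ (-i)

def K : Subgroup F₂ := Subgroup.closure {w | ∃ i : ℤ, w = c i}
def Kn (n : ℕ) : Subgroup F₂ := Subgroup.closure {w | ∃ i : ℤ, |i| ≤ (n : ℤ) ∧ w = c i}

lemma c_mem (i : ℤ) : c i ∈ K := Subgroup.subset_closure ⟨i, rfl⟩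

lemma y_mem : y ∈ K := by
  have := c_mem 0
  simpa [c] using this

/-! ### Permutation representation (lamplighter) -/

abbrev Pt : Type := ℤ × (ℤ → ℤ)

def X : Equiv.Perm Pt := (Equiv.addRight (1 : ℤ)).prodCongr (Equiv.refl _)

def Y : Equiv.Perm Pt where
  toFun p := (p.1, fun j => if j = p.1 then p.2 j + 1 else p.2 j)
  invFun p := (p.1, fun j => if j = p.1 then p.2 j - 1 else p.2 j)
  left_inv p := by
    refine Prod.ext rfl (funext fun j => ?_)
    by_cases h : j = p.1 <;> simp [h]
  right_inv p := by
    refine Prod.ext rfl (funext fun j => ?_)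
    by_cases h : j = p.1 <;> simp [h]

lemma X_apply (p : Pt) : X p = (p.1 + 1, p.2) := rfl

lemma X_inv_apply (p : Pt) : X⁻¹ p = (p.1 - 1, p.2) := rfl

lemma Y_apply (p : Pt) : Y p = (p.1, fun j => if j = p.1 then p.2 j + 1 else p.2 j) := rfl

lemma X_zpow (i : ℤ) : ∀ p : Pt, (X ^ i) p = (p.1 + i, p.2) := by
  induction i using Int.induction_on with
  | zero => intro p; simp
  | succ n ih =>
    intro p
    have h : X ^ ((n : ℤ) + 1) = X ^ (n : ℤ) * X := zpow_add_one X n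
    rw [h, Equiv.Perm.mul_apply, ih, X_apply]
    rw [Prod.mk.injEq]
    refine ⟨?_, rfl⟩
    dsimp only
    ring
  | pred n ih =>
    intro p
    have h : X ^ (-(n : ℤ) - 1) = X ^ (-(n : ℤ)) * X⁻¹ := zpow_sub_one X (-(n : ℤ))
    rw [h, Equiv.Perm.mul_apply, X_inv_apply, ih]
    rw [Prod.mk.injEq]
    refine ⟨?_, rfl⟩
    dsimp only
    ring

def h : F₂ →* Equiv.Perm Pt := FreeGroup.lift fun i : Fin 2 => if i = 0 then X else Y

lemma hx : h x = X := by simp [h, x]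
lemma hy : h y = Y := by simp [h, y]

lemma h_c (i : ℤ) (p : Pt) :
    h (c i) p = (p.1, fun j => if j = p.1 - i then p.2 j + 1 else p.2 j) := by
  simp only [c, map_mul, map_zpow, hx, hy, Equiv.Perm.mul_apply]
  rw [X_zpow (-i) p, Y_apply, X_zpow]
  rw [Prod.mk.injEq]
  constructor
  · dsimp only; ring
  · dsimp only
    funext j
    rw [show p.1 - i = p.1 + -i from sub_eq_add_neg p.1 i]

def P (n : ℕ) : Subgroup (Equiv.Perm Pt) where
  carrier := {σ | ∀ p : Pt, (σ p).1 = p.1 ∧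
    (σ p).2 (p.1 - ((n : ℤ) + 1)) = p.2 (p.1 - ((n : ℤ) + 1))}
  one_mem' := fun _ => ⟨rfl, rfl⟩
  mul_mem' := by
    intro a b ha hb p
    obtain ⟨hb1, hb2⟩ := hb p
    obtain ⟨ha1, ha2⟩ := ha (b p)
    rw [hb1] at ha1 ha2
    refine ⟨ha1, ?_⟩
    rw [Equiv.Perm.mul_apply, ha2, hb2]
  inv_mem' := by
    intro a ha p
    obtain ⟨h1, h2⟩ := ha (a⁻¹ p)
    rw [show a (a⁻¹ p) = p from a.apply_symm_apply p] at h1 h2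
    refine ⟨h1.symm, ?_⟩
    rw [← h1] at h2
    exact h2.symm

lemma c_not_mem (n : ℕ) : c ((n : ℤ) + 1) ∉ Kn n := by
  intro hmem
  have hle : Kn n ≤ (P n).comap h := by
    unfold Kn
    rw [Subgroup.closure_le]
    rintro w ⟨i, hi, rfl⟩
    rw [abs_le] at hi
    rw [SetLike.mem_coe, Subgroup.mem_comap]
    intro p
    rw [h_c]
    refine ⟨rfl, ?_⟩
    have hne : p.1 - ((n : ℤ) + 1) ≠ p.1 - i := by omega
    simp [hne]
  have hP := Subgroup.mem_comap.mp (hle hmem) ((0 : ℤ), fun _ => (0 : ℤ))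
  rw [h_c] at hP
  simp at hP

/-! ### K is the normal closure of y -/

lemma conj_x (i : ℤ) : x * c i * x⁻¹ = c (i + 1) := by
  simp only [c]; group

lemma conj_x_inv (i : ℤ) : x⁻¹ * c i * x = c (i - 1) := by
  simp only [c]; group

lemma conj_of_gens (g : F₂) (hg : ∀ i : ℤ, g * c i * g⁻¹ ∈ K) :
    ∀ m ∈ K, g * m * g⁻¹ ∈ K := by
  intro m hm
  induction hm using Subgroup.closure_induction with
  | mem w hw => obtain ⟨i, rfl⟩ := hw; exact hg i
  | one =>
    have e : g * 1 * g⁻¹ = 1 := by group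
    rw [e]; exact one_mem K
  | mul a b _ _ pa pb =>
    have e : g * (a * b) * g⁻¹ = (g * a * g⁻¹) * (g * b * g⁻¹) := by group
    rw [e]; exact mul_mem pa pb
  | inv a _ pa =>
    have e : g * a⁻¹ * g⁻¹ = (g * a * g⁻¹)⁻¹ := by group
    rw [e]; exact inv_mem pa

lemma K_normal : K.Normal := by
  have hx1 : ∀ i : ℤ, x * c i * x⁻¹ ∈ K := fun i => by rw [conj_x i]; exact c_mem _
  have hx2 : ∀ i : ℤ, x⁻¹ * c i * x ∈ K := fun i => by rw [conj_x_inv i]; exact c_mem _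
  have hy1 : ∀ i : ℤ, y * c i * y⁻¹ ∈ K :=
    fun i => mul_mem (mul_mem y_mem (c_mem i)) (inv_mem y_mem)
  have hy2 : ∀ i : ℤ, y⁻¹ * c i * y ∈ K :=
    fun i => mul_mem (mul_mem (inv_mem y_mem) (c_mem i)) y_mem
  have main : ∀ g : F₂, (∀ m ∈ K, g * m * g⁻¹ ∈ K) ∧ (∀ m ∈ K, g⁻¹ * m * g ∈ K) := by
    intro g
    induction g using FreeGroup.induction_on with
    | C1 =>
      constructor <;> intro m hm <;> simpa using hm
    | of a =>
      fin_cases a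
      · exact ⟨conj_of_gens x hx1,
          fun m hm => by simpa [x] using conj_of_gens x⁻¹ (fun i => by simpa using hx2 i) m hm⟩
      · exact ⟨conj_of_gens y hy1,
          fun m hm => by simpa [y] using conj_of_gens y⁻¹ (fun i => by simpa using hy2 i) m hm⟩
    | inv_of a ih =>
      exact ⟨fun m hm => by simpa using ih.2 m hm, fun m hm => by simpa using ih.1 m hm⟩
    | mul a b iha ihb =>
      constructor
      · intro m hm
        have e : a * b * m * (a * b)⁻¹ = a * (b * m * b⁻¹) * a⁻¹ := by group
        rw [e]; exact iha.1 _ (ihb.1 m hm)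
      · intro m hm
        have e : (a * b)⁻¹ * m * (a * b) = b⁻¹ * (a⁻¹ * m * a) * b := by group
        rw [e]; exact ihb.2 _ (iha.2 m hm)
  exact ⟨fun m hm g => (main g).1 m hm⟩

lemma K_eq_ncl : K = Subgroup.normalClosure {y} := by
  apply le_antisymm
  · unfold K
    rw [Subgroup.closure_le]
    rintro w ⟨i, rfl⟩
    have hyn : y ∈ Subgroup.normalClosure ({y} : Set F₂) :=
      Subgroup.subset_normalClosure rfl
    have := (Subgroup.normalClosure_normal (s := ({y} : Set F₂))).conj_mem y hyn (x ^ i)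
    simpa [c, zpow_neg] using this
  · haveI := K_normal
    exact Subgroup.normalClosure_le_normal (by simpa using y_mem)

lemma ncl_le_ker : Subgroup.normalClosure ({y} : Set F₂) ≤ φ.ker := by
  haveI : φ.ker.Normal := MonoidHom.normal_ker φ
  refine Subgroup.normalClosure_le_normal ?_
  simp [Set.singleton_subset_iff, MonoidHom.mem_ker, φy]

lemma ncl_eq_ker : Subgroup.normalClosure ({y} : Set F₂) = φ.ker := by
  apply le_antisymm ncl_le_ker
  intro w hw
  set N := Subgroup.normalClosure ({y} : Set F₂) with hN
  have hyN : y ∈ N := Subgroup.subset_normalClosure rfl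
  let φ' : F₂ ⧸ N →* Multiplicative ℤ :=
    QuotientGroup.lift N φ (fun g hg => ncl_le_ker hg)
  let s : Multiplicative ℤ →* F₂ ⧸ N := zpowersHom _ ((QuotientGroup.mk' N) x)
  have hcomp : (s.comp φ').comp (QuotientGroup.mk' N) = QuotientGroup.mk' N := by
    apply FreeGroup.ext_hom
    intro a
    fin_cases a
    · show s (φ' ((QuotientGroup.mk' N) x)) = (QuotientGroup.mk' N) x
      have h1 : φ' ((QuotientGroup.mk' N) x) = φ x := rfl
      rw [h1, φx]
      simp [s]
    · show s (φ' ((QuotientGroup.mk' N) y)) = (QuotientGroup.mk' N) y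
      have h1 : φ' ((QuotientGroup.mk' N) y) = φ y := rfl
      have h2 : (QuotientGroup.mk' N) y = 1 := (QuotientGroup.eq_one_iff y).mpr hyN
      rw [h1, φy, h2, map_one]
  have hw1 : (QuotientGroup.mk' N) w = 1 := by
    have hcw := DFunLike.congr_fun hcomp w
    simp only [MonoidHom.comp_apply] at hcw
    have hφ'w : φ' ((QuotientGroup.mk' N) w) = φ w := rfl
    rw [hφ'w] at hcw
    have hφw : φ w = 1 := hw
    rw [← hcw, hφw, map_one]
  exact (QuotientGroup.eq_one_iff w).mp hw1

/-! ### The subgroups H1 and H2 -/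

def g1 : F₂ →* F₂ × Multiplicative ℤ := (MonoidHom.id F₂).prod φ
def g2 : F₂ →* F₂ × Multiplicative ℤ := MonoidHom.inl F₂ (Multiplicative ℤ)

lemma closure_xy : Subgroup.closure ({x, y} : Set F₂) = ⊤ := by
  have hxy : ({x, y} : Set F₂) = Set.range FreeGroup.of := by
    ext w
    simp only [Set.mem_insert_iff, Set.mem_singleton_iff, Set.mem_range]
    constructor
    · rintro (rfl | rfl)
      exacts [⟨0, rfl⟩, ⟨1, rfl⟩]
    · rintro ⟨i, rfl⟩
      fin_cases i
      · left; rfl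
      · right; rfl
  rw [hxy, FreeGroup.closure_range_of]

lemma H1_eq : Subgroup.closure {((x : F₂), t), (y, 1)} = g1.range := by
  have himg : ({((x : F₂), t), (y, 1)} : Set (F₂ × Multiplicative ℤ)) = g1 '' {x, y} := by
    rw [Set.image_pair]
    have h1 : g1 x = (x, t) := by
      have : g1 x = (x, φ x) := rfl
      rw [this, φx]; rfl
    have h2 : g1 y = (y, 1) := by
      have : g1 y = (y, φ y) := rfl
      rw [this, φy]
    rw [h1, h2]
  rw [himg, ← MonoidHom.map_closure, closure_xy, ← MonoidHom.range_eq_map]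

lemma H2_eq : Subgroup.closure {((x : F₂), (1 : Multiplicative ℤ)), (y, 1)} = g2.range := by
  have himg : ({((x : F₂), 1), (y, 1)} : Set (F₂ × Multiplicative ℤ)) = g2 '' {x, y} := by
    rw [Set.image_pair]; rfl
  rw [himg, ← MonoidHom.map_closure, closure_xy, ← MonoidHom.range_eq_map]

lemma inter_eq :
    (Subgroup.closure {((x : F₂), t), (y, 1)} ⊓
      Subgroup.closure {((x : F₂), (1 : Multiplicative ℤ)), (y, 1)}) =
      (φ.ker).prod (⊥ : Subgroup (Multiplicative ℤ)) := by
  rw [H1_eq, H2_eq]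
  ext ⟨w, z⟩
  simp only [Subgroup.mem_inf, MonoidHom.mem_range, Subgroup.mem_prod, Subgroup.mem_bot,
    MonoidHom.mem_ker]
  constructor
  · rintro ⟨⟨v, hv⟩, ⟨u, hu⟩⟩
    have hv1 : v = w := congrArg Prod.fst hv
    have hv2 : φ v = z := congrArg Prod.snd hv
    have hu2 : (1 : Multiplicative ℤ) = z := congrArg Prod.snd hu
    subst hv1
    exact ⟨hv2.trans hu2.symm, hu2.symm⟩
  · rintro ⟨h1, rfl⟩
    exact ⟨⟨w, Prod.ext rfl h1⟩, ⟨w, rfl⟩⟩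

lemma map_g2 (H : Subgroup F₂) :
    H.map g2 = H.prod (⊥ : Subgroup (Multiplicative ℤ)) := by
  ext ⟨w, z⟩
  simp only [Subgroup.mem_map, Subgroup.mem_prod, Subgroup.mem_bot]
  constructor
  · rintro ⟨v, hv, heq⟩
    have h1 : v = w := congrArg Prod.fst heq
    have h2 : (1 : Multiplicative ℤ) = z := congrArg Prod.snd heq
    subst h1
    exact ⟨hv, h2.symm⟩
  · rintro ⟨hw, rfl⟩
    exact ⟨w, hw, rfl⟩

lemma ker_prod_eq_closure :
    (φ.ker).prod (⊥ : Subgroup (Multiplicative ℤ)) =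
      Subgroup.closure {g : F₂ × Multiplicative ℤ | ∃ i : ℤ, g = (x ^ i * y * x ^ (-i), 1)} := by
  have hset : {g : F₂ × Multiplicative ℤ | ∃ i : ℤ, g = (x ^ i * y * x ^ (-i), 1)} =
      g2 '' {w | ∃ i : ℤ, w = c i} := by
    ext p
    simp only [Set.mem_setOf_eq, Set.mem_image]
    constructor
    · rintro ⟨i, rfl⟩; exact ⟨c i, ⟨i, rfl⟩, rfl⟩
    · rintro ⟨v, ⟨i, rfl⟩, rfl⟩; exact ⟨i, rfl⟩
  rw [hset, ← MonoidHom.map_closure]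
  show (φ.ker).prod ⊥ = K.map g2
  rw [map_g2, K_eq_ncl, ncl_eq_ker]

/-! ### Not finitely generated -/

lemma K_not_fg : ¬ K.FG := by
  intro hfg
  classical
  obtain ⟨T, hT, hTfin⟩ := (Subgroup.fg_iff K).mp hfg
  have Kn_mono : Monotone Kn := by
    intro a b hab
    apply Subgroup.closure_mono
    rintro w ⟨i, hi, rfl⟩
    exact ⟨i, le_trans hi (by exact_mod_cast hab), rfl⟩
  have hdir : Directed (· ≤ ·) Kn :=
    fun a b => ⟨max a b, Kn_mono (le_max_left a b), Kn_mono (le_max_right a b)⟩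
  have hsup : K = ⨆ n : ℕ, Kn n := by
    unfold K Kn
    have hC : {w : F₂ | ∃ i : ℤ, w = c i} =
        ⋃ n : ℕ, {w : F₂ | ∃ i : ℤ, |i| ≤ (n : ℤ) ∧ w = c i} := by
      ext w
      simp only [Set.mem_setOf_eq, Set.mem_iUnion]
      constructor
      · rintro ⟨i, rfl⟩
        exact ⟨i.natAbs, i, by rw [Int.abs_eq_natAbs], rfl⟩
      · rintro ⟨n, i, _, rfl⟩; exact ⟨i, rfl⟩
    rw [hC, Subgroup.closure_iUnion]
  let f : F₂ → ℕ := fun w => if hw : ∃ n, w ∈ Kn n then hw.choose else 0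
  have hf : ∀ w, (∃ n, w ∈ Kn n) → w ∈ Kn (f w) := by
    intro w hw
    simp only [f, dif_pos hw]
    exact hw.choose_spec
  set N := hTfin.toFinset.sup f with hNdef
  have hTsub : T ⊆ (Kn N : Set F₂) := by
    intro w hw
    have hwK : w ∈ K := by rw [← hT]; exact Subgroup.subset_closure hw
    rw [hsup] at hwK
    obtain ⟨n, hn⟩ := (Subgroup.mem_iSup_of_directed hdir).mp hwK
    exact Kn_mono (Finset.le_sup (hTfin.mem_toFinset.mpr hw)) (hf w ⟨n, hn⟩)
  have hKle : K ≤ Kn N := by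
    rw [← hT, Subgroup.closure_le]
    exact hTsub
  exact c_not_mem N (hKle (c_mem ((N : ℤ) + 1)))

lemma fg_map {G H : Type*} [Group G] [Group H] {S : Subgroup G} (hS : S.FG) (f : G →* H) :
    (S.map f).FG := by
  obtain ⟨s, hclo, hfin⟩ := (Subgroup.fg_iff S).mp hS
  exact (Subgroup.fg_iff _).mpr ⟨f '' s, by rw [← MonoidHom.map_closure, hclo], hfin.image f⟩

/-! ### Main theorem -/

theorem moldavanski :
    (Subgroup.closure {(x, t), (y, 1)} ⊓ Subgroup.closure {(x, 1), (y, 1)} :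
        Subgroup (F₂ × Multiplicative ℤ)) =
      (Subgroup.normalClosure {y}).prod (⊥ : Subgroup (Multiplicative ℤ)) ∧
    Subgroup.normalClosure {y} =
      (FreeGroup.lift fun i : Fin 2 =>
        if i = 0 then Multiplicative.ofAdd (1 : ℤ) else 1).ker ∧
    (Subgroup.closure {(x, t), (y, 1)} ⊓ Subgroup.closure {(x, 1), (y, 1)} :
        Subgroup (F₂ × Multiplicative ℤ)) =
      Subgroup.closure {g : F₂ × Multiplicative ℤ |
        ∃ i : ℤ, g = (x ^ i * y * x ^ (-i), 1)} ∧
    ¬ (Subgroup.closure {(x, t), (y, 1)} ⊓ Subgroup.closure {(x, 1), (y, 1)} :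
        Subgroup (F₂ × Multiplicative ℤ)).FG := by
  have hker : Subgroup.normalClosure ({y} : Set F₂) = φ.ker := ncl_eq_ker
  have e1 : (Subgroup.closure {(x, t), (y, 1)} ⊓ Subgroup.closure {(x, 1), (y, 1)} :
      Subgroup (F₂ × Multiplicative ℤ)) =
      (Subgroup.normalClosure {y}).prod (⊥ : Subgroup (Multiplicative ℤ)) := by
    rw [inter_eq, hker]
  refine ⟨e1, hker, ?_, ?_⟩
  · rw [inter_eq, ker_prod_eq_closure]
  · intro hFG
    rw [e1, hker] at hFG
    have h2 := fg_map hFG (MonoidHom.fst F₂ (Multiplicative ℤ))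
    rw [← map_g2 φ.ker, Subgroup.map_map,
      show (MonoidHom.fst F₂ (Multiplicative ℤ)).comp g2 = MonoidHom.id F₂ from
        MonoidHom.ext fun w => rfl,
      Subgroup.map_id] at h2
    apply K_not_fg
    rw [K_eq_ncl, hker]
    exact h2

end Moldavanski
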